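/- Let G be a finite simple graph with minimum degree δ(G) = 1. Then G is 2-γ'MB-critical if and only if G is isomorphic to the disjoint union of H₂ and H_m for some m ≥ 2. -/

import Mathlib

/-- `D` is a dominating set of `G`: every vertex not in `D` has a neighbor in `D`. -/
def Dominating {V : Type*} (G : SimpleGraph V) (D : Set V) : Prop :=
  ∀ v, v ∉ D → ∃ d ∈ D, G.Adj d v

/-- Dominator wins the S-game on `G` within one move. -/
def WinsWithin1 {V : Type*} (G : SimpleGraph V) : Prop :=
  ∀ s₁ : V, ∃ d₁, d₁ ≠ s₁ ∧ Dominating G {d₁}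

/-- Dominator wins the S-game on `G` within two moves. -/
def WinsWithin2 {V : Type*} (G : SimpleGraph V) : Prop :=
  ∀ s₁ : V, ∃ d₁, d₁ ≠ s₁ ∧
    (Dominating G {d₁} ∨
      ∀ s₂, s₂ ∉ ({s₁, d₁} : Set V) →
        ∃ d₂, d₂ ∉ ({s₁, d₁, s₂} : Set V) ∧ Dominating G {d₁, d₂})

/-- `γ'MB(G) = 2`: Dominator wins the S-game within two moves but not within one. -/
def MBPrimeEqTwo {V : Type*} (G : SimpleGraph V) : Prop :=
  WinsWithin2 G ∧ ¬ WinsWithin1 G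

/-- `G` is `2`-`γ'MB`-critical: `γ'MB(G) = 2` and for every edge `e`, Dominator does not
win the S-game on `G - e` within two moves. -/
def Critical2 {V : Type*} (G : SimpleGraph V) : Prop :=
  MBPrimeEqTwo G ∧ ∀ u v : V, G.Adj u v → ¬ WinsWithin2 (G.deleteEdges {s(u, v)})

/-- The graph `H_m`, the join of `K₂` with the complement of `K_{m-2}`: the first two
vertices are adjacent to everything, the remaining vertices form an independent set.
(`H₀` is the null graph, `H₂ = K₂`.) -/
def HGraph (m : ℕ) : SimpleGraph (Fin m) :=
  SimpleGraph.fromRel (fun u _ => u.val < 2)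

/-- The disjoint union of two simple graphs. -/
def DisjUnion {α β : Type*} (G : SimpleGraph α) (H : SimpleGraph β) :
    SimpleGraph (α ⊕ β) :=
  SimpleGraph.fromRel (fun u v =>
    match u, v with
    | .inl a, .inl b => G.Adj a b
    | .inr a, .inr b => H.Adj a b
    | _, _ => False)


open SimpleGraph Sum

section Helpers
variable {V : Type*} {G : SimpleGraph V}

lemma dominating_pair {a b : V} (h : ∀ u, u ≠ a → u ≠ b → G.Adj a u ∨ G.Adj b u) :
    Dominating G {a, b} := by
  intro u hu
  simp only [Set.mem_insert_iff, Set.mem_singleton_iff, not_or] at hu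
  rcases h u hu.1 hu.2 with h' | h'
  · exact ⟨a, by simp, h'⟩
  · exact ⟨b, by simp, h'⟩

lemma dominating_pair_elim {a b u : V} (h : Dominating G {a, b}) (hua : u ≠ a) (hub : u ≠ b) :
    G.Adj a u ∨ G.Adj b u := by
  obtain ⟨d, hd, hadj⟩ := h u (by simp [hua, hub])
  simp only [Set.mem_insert_iff, Set.mem_singleton_iff] at hd
  rcases hd with rfl | rfl
  · exact Or.inl hadj
  · exact Or.inr hadj

lemma dominating_single_elim {a u : V} (h : Dominating G {a}) (hua : u ≠ a) : G.Adj a u := by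
  obtain ⟨d, hd, hadj⟩ := h u (by simp [hua])
  simp only [Set.mem_singleton_iff] at hd
  exact hd ▸ hadj

lemma dominating_of_deleteEdges {s : Set (Sym2 V)} {D : Set V}
    (h : Dominating (G.deleteEdges s) D) : Dominating G D := by
  intro u hu
  obtain ⟨d, hd, hadj⟩ := h u hu
  exact ⟨d, hd, ((SimpleGraph.deleteEdges_adj).mp hadj).1⟩

/-- Abstract nonwinning lemma. -/
lemma notWins2_of {G' : SimpleGraph V} {s₁ t₁ t₂ : V} (ht₁ : t₁ ≠ s₁) (ht₂ : t₂ ≠ s₁)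
    (ht : t₁ ≠ t₂)
    (Hs : ∀ d, d ≠ s₁ → ¬ Dominating G' {d})
    (H : ∀ d₁ d₂ : V, d₁ ≠ s₁ → d₂ ≠ s₁ → ¬ Dominating G' {d₁, d₂}) :
    ¬ WinsWithin2 G' := by
  classical
  intro h
  obtain ⟨d₁, hd₁, hcase⟩ := h s₁
  rcases hcase with hdom | h2
  · exact Hs d₁ hd₁ hdom
  · set s₂ := if d₁ = t₁ then t₂ else t₁ with hs₂
    have hs₂s₁ : s₂ ≠ s₁ := by by_cases h' : d₁ = t₁ <;> simp [hs₂, h', ht₁, ht₂]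
    have hs₂d₁ : s₂ ≠ d₁ := by
      by_cases h' : d₁ = t₁
      · simp only [hs₂, if_pos h']; rw [h']; exact Ne.symm ht
      · simp only [hs₂, if_neg h']; exact fun hh => h' hh.symm
    obtain ⟨d₂, hd₂, hdom⟩ := h2 s₂ (by simp [hs₂s₁, hs₂d₁])
    simp only [Set.mem_insert_iff, Set.mem_singleton_iff, not_or] at hd₂
    exact H d₁ d₂ hd₁ hd₂.1 hdom

/-- The structural characterization. -/
structure Struct {V : Type*} (G : SimpleGraph V) (v w x y : V) : Prop where
  hvw : G.Adj v w
  hNv : ∀ u, G.Adj v u → u = w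
  hNw : ∀ u, G.Adj w u → u = v
  hxv : x ≠ v
  hxw : x ≠ w
  hyv : y ≠ v
  hyw : y ≠ w
  hxy : x ≠ y
  hU : ∀ a b, a ≠ v → a ≠ w → b ≠ v → b ≠ w →
    (G.Adj a b ↔ a ≠ b ∧ (a = x ∨ a = y ∨ b = x ∨ b = y))

namespace Struct

variable {v w x y : V}

lemma swapXY (S : Struct G v w x y) : Struct G v w y x where
  hvw := S.hvw
  hNv := S.hNv
  hNw := S.hNw
  hxv := S.hyv
  hxw := S.hyw
  hyv := S.hxv
  hyw := S.hxw
  hxy := S.hxy.symm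
  hU a b ha hb hc hd := by rw [S.hU a b ha hb hc hd]; tauto

lemma hubx (S : Struct G v w x y) : ∀ u, u ≠ v → u ≠ w → u ≠ x → G.Adj x u := fun u h1 h2 h3 =>
  (S.hU x u S.hxv S.hxw h1 h2).mpr ⟨fun h => h3 h.symm, Or.inl rfl⟩

lemma adj_to_v (S : Struct G v w x y) {u : V} (h : G.Adj u v) : u = w := S.hNv u h.symm
lemma adj_to_w (S : Struct G v w x y) {u : V} (h : G.Adj u w) : u = v := S.hNw u h.symm

lemma no_singleton (S : Struct G v w x y) : ∀ d, ¬ Dominating G {d} := by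
  intro d hdom
  by_cases hd : d = v
  · subst hd
    exact S.hxw (S.hNv x (dominating_single_elim hdom S.hxv))
  · have h1 : G.Adj d v := dominating_single_elim hdom (fun h => hd h.symm)
    have h2 : d = w := S.adj_to_v h1
    subst h2
    exact S.hxv (S.hNw x (dominating_single_elim hdom S.hxw))

end Struct
end Helpers

section Wins
variable {V : Type*} {G : SimpleGraph V}

/-- If `G` has an edge `v–w` and two "hubs" `x ≠ y` adjacent to everything outside
`{v,w}` (other than themselves), then Dominator wins within two moves. -/
lemma wins2_of_hubs {v w x y : V} (hvw : G.Adj v w)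
    (hxv : x ≠ v) (hxw : x ≠ w) (hyv : y ≠ v) (hyw : y ≠ w) (hxy : x ≠ y)
    (hxhub : ∀ u, u ≠ v → u ≠ w → u ≠ x → G.Adj x u)
    (hyhub : ∀ u, u ≠ v → u ≠ w → u ≠ y → G.Adj y u) :
    WinsWithin2 G := by
  classical
  have hvwne : v ≠ w := hvw.ne
  have key : ∀ c h' : V, (c = v ∨ c = w) → (h' = x ∨ h' = y) →
      ∀ u, u ≠ c → u ≠ h' → G.Adj c u ∨ G.Adj h' u := by
    rintro c h' hc hh u huc huh
    by_cases huv : u = v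
    · subst huv
      rcases hc with rfl | rfl
      · exact absurd rfl huc
      · exact Or.inl hvw.symm
    by_cases huw : u = w
    · subst huw
      rcases hc with rfl | rfl
      · exact Or.inl hvw
      · exact absurd rfl huc
    rcases hh with rfl | rfl
    · exact Or.inr (hxhub u huv huw (fun h => huh h))
    · exact Or.inr (hyhub u huv huw (fun h => huh h))
  have domCH : ∀ c h' : V, (c = v ∨ c = w) → (h' = x ∨ h' = y) → Dominating G {c, h'} :=
    fun c h' hc hh => dominating_pair (key c h' hc hh)
  have domHC : ∀ c h' : V, (c = v ∨ c = w) → (h' = x ∨ h' = y) → Dominating G {h', c} :=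
    fun c h' hc hh => dominating_pair (fun u h1 h2 => (key c h' hc hh u h2 h1).symm)
  intro s₁
  by_cases hs : s₁ = v ∨ s₁ = w
  · -- d₁ := the other of v, w
    refine ⟨if s₁ = v then w else v, ?_, Or.inr ?_⟩
    · by_cases h' : s₁ = v
      · simp only [if_pos h']; rw [h']; exact hvwne.symm
      · simp only [if_neg h']; exact fun hh => h' hh.symm
    · intro s₂ _
      refine ⟨if s₂ = x then y else x, ?_, ?_⟩
      · have h1 : (if s₂ = x then y else x) = x ∨ (if s₂ = x then y else x) = y := by
          by_cases h' : s₂ = x <;> simp [h']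
        have h2 : (if s₂ = x then y else x) ≠ s₂ := by
          by_cases h' : s₂ = x
          · simp only [if_pos h']; rw [h']; exact hxy.symm
          · simp only [if_neg h']; exact fun hh => h' hh.symm
        simp only [Set.mem_insert_iff, Set.mem_singleton_iff, not_or]
        refine ⟨?_, ?_, h2⟩
        · rcases h1 with h1 | h1 <;> rw [h1] <;> rcases hs with rfl | rfl
          · exact hxv
          · exact hxw
          · exact hyv
          · exact hyw
        · by_cases h' : s₁ = v
          · simp only [if_pos h']
            rcases h1 with h1 | h1 <;> rw [h1]
            · exact hxw
            · exact hyw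
          · simp only [if_neg h']
            have : s₁ = w := hs.resolve_left h'
            subst this
            rcases h1 with h1 | h1 <;> rw [h1]
            · exact hxv
            · exact hyv
      · apply domCH
        · by_cases h' : s₁ = v <;> simp [h']
        · by_cases h' : s₂ = x <;> simp [h']
  · push_neg at hs
    refine ⟨if s₁ = x then y else x, ?_, Or.inr ?_⟩
    · by_cases h' : s₁ = x
      · simp only [if_pos h']; rw [h']; exact hxy.symm
      · simp only [if_neg h']; exact fun hh => h' hh.symm
    · intro s₂ _
      have hd₁ : (if s₁ = x then y else x) = x ∨ (if s₁ = x then y else x) = y := by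
        by_cases h' : s₁ = x <;> simp [h']
      refine ⟨if s₂ = v then w else v, ?_, ?_⟩
      · have h1 : (if s₂ = v then w else v) = v ∨ (if s₂ = v then w else v) = w := by
          by_cases h' : s₂ = v <;> simp [h']
        have h2 : (if s₂ = v then w else v) ≠ s₂ := by
          by_cases h' : s₂ = v
          · simp only [if_pos h']; rw [h']; exact hvwne.symm
          · simp only [if_neg h']; exact fun hh => h' hh.symm
        simp only [Set.mem_insert_iff, Set.mem_singleton_iff, not_or]
        refine ⟨?_, ?_, h2⟩
        · rcases h1 with h1 | h1 <;> rw [h1]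
          · exact fun hh => hs.1 hh.symm
          · exact fun hh => hs.2 hh.symm
        · rcases h1 with h1 | h1 <;> rw [h1] <;> rcases hd₁ with h3 | h3 <;> rw [h3]
          · exact hxv.symm
          · exact hyv.symm
          · exact hxw.symm
          · exact hyw.symm
      · apply domHC
        · by_cases h' : s₂ = v <;> simp [h']
        · exact hd₁

lemma wins2_of_struct {v w x y : V} (S : Struct G v w x y) : WinsWithin2 G :=
  wins2_of_hubs S.hvw S.hxv S.hxw S.hyv S.hyw S.hxy S.hubx S.swapXY.hubx

end Wins

section NotWins
variable {V : Type*} {G : SimpleGraph V} {v w x y : V}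

lemma Struct.notwins_vw (S : Struct G v w x y) :
    ¬ WinsWithin2 (G.deleteEdges {s(v, w)}) := by
  set G' := G.deleteEdges {s(v, w)} with hG'
  have hviso : ∀ d, ¬ G'.Adj d v := by
    intro d hd
    rw [hG', SimpleGraph.deleteEdges_adj] at hd
    have hdw : d = w := S.adj_to_v hd.1
    subst hdw
    exact hd.2 (by rw [Set.mem_singleton_iff]; exact Sym2.eq_swap)
  apply notWins2_of (s₁ := v) (t₁ := x) (t₂ := y) S.hxv S.hyv S.hxy
  · intro d hd hdom
    exact hviso d (dominating_single_elim hdom (Ne.symm hd))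
  · intro d₁ d₂ h1 h2 hdom
    rcases dominating_pair_elim hdom (Ne.symm h1) (Ne.symm h2) with h | h
    exacts [hviso _ h, hviso _ h]

lemma Struct.notwins_xu (S : Struct G v w x y) {u : V}
    (hu : u ≠ v) (huw : u ≠ w) (hux : u ≠ x) (huy : u ≠ y) :
    ¬ WinsWithin2 (G.deleteEdges {s(x, u)}) := by
  set G' := G.deleteEdges {s(x, u)} with hG'
  have main : ∀ c, (c = v ∨ c = w) → ¬ Dominating G' {u, c} := by
    intro c hcvw hdom'
    have hxu : x ≠ u := Ne.symm hux
    have hxc : x ≠ c := by rcases hcvw with rfl | rfl; exacts [S.hxv, S.hxw]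
    rcases dominating_pair_elim hdom' hxu hxc with h | h
    · rw [hG', SimpleGraph.deleteEdges_adj] at h
      exact h.2 (by rw [Set.mem_singleton_iff]; exact Sym2.eq_swap)
    · rw [hG', SimpleGraph.deleteEdges_adj] at h
      rcases hcvw with rfl | rfl
      · exact S.hxw (S.hNv x h.1)
      · exact S.hxv (S.hNw x h.1)
  apply notWins2_of (s₁ := y) (t₁ := v) (t₂ := w) (Ne.symm S.hyv) (Ne.symm S.hyw) S.hvw.ne
  · intro d _ hdom
    exact S.no_singleton d (dominating_of_deleteEdges hdom)
  · intro d₁ d₂ h1 h2 hdom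
    have hadjU : ∀ d, G.Adj d u → d ≠ y → d = x := by
      intro d hd hdy
      have hdv : d ≠ v := fun h => huw (S.hNv u (h ▸ hd))
      have hdw : d ≠ w := fun h => hu (S.hNw u (h ▸ hd))
      rcases ((S.hU d u hdv hdw hu huw).mp hd).2 with h | h | h | h
      exacts [h, absurd h hdy, absurd h.symm (Ne.symm hux), absurd h.symm (Ne.symm huy)]
    have hmem : u = d₁ ∨ u = d₂ := by
      by_contra hcon
      push_neg at hcon
      rcases dominating_pair_elim hdom hcon.1 hcon.2 with h | h <;>
        rw [hG', SimpleGraph.deleteEdges_adj] at h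
      · have := hadjU d₁ h.1 h1
        subst this
        exact h.2 rfl
      · have := hadjU d₂ h.1 h2
        subst this
        exact h.2 rfl
    have hc : (d₁ = v ∨ d₁ = w) ∨ (d₂ = v ∨ d₂ = w) := by
      by_cases h1' : v = d₁
      · exact Or.inl (Or.inl h1'.symm)
      by_cases h2' : v = d₂
      · exact Or.inr (Or.inl h2'.symm)
      rcases dominating_pair_elim hdom h1' h2' with h | h <;>
        rw [hG', SimpleGraph.deleteEdges_adj] at h
      · exact Or.inl (Or.inr (S.adj_to_v h.1))
      · exact Or.inr (Or.inr (S.adj_to_v h.1))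
    rcases hmem with rfl | rfl
    · rcases hc with hc | hc
      · rcases hc with rfl | rfl; exacts [hu rfl, huw rfl]
      · exact main d₂ hc hdom
    · rcases hc with hc | hc
      · rw [Set.pair_comm] at hdom
        exact main d₁ hc hdom
      · rcases hc with rfl | rfl; exacts [hu rfl, huw rfl]

lemma Struct.notwins_xy (S : Struct G v w x y) :
    ¬ WinsWithin2 (G.deleteEdges {s(x, y)}) := by
  classical
  set G' := G.deleteEdges {s(x, y)} with hG'
  by_cases hExtra : ∃ u, u ≠ v ∧ u ≠ w ∧ u ≠ x ∧ u ≠ y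
  · obtain ⟨u, hu, huw, hux, huy⟩ := hExtra
    have main : ∀ h' c, (h' = x ∨ h' = y) → (c = v ∨ c = w) → ¬ Dominating G' {h', c} := by
      intro h' c hh hcvw hdom'
      set h'' := if h' = x then y else x with hh''
      have hother : h'' = x ∨ h'' = y := by by_cases hp : h' = x <;> simp [hh'', hp]
      have hne1 : h'' ≠ h' := by
        by_cases hp : h' = x
        · simp only [hh'', if_pos hp]; rw [hp]; exact S.hxy.symm
        · simp only [hh'', if_neg hp]; exact fun hc => hp hc.symm
      have hne2 : h'' ≠ c := by
        rcases hother with h | h <;> rw [h] <;> rcases hcvw with rfl | rfl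
        exacts [S.hxv, S.hxw, S.hyv, S.hyw]
      rcases dominating_pair_elim hdom' hne1 hne2 with h | h <;>
        rw [hG', SimpleGraph.deleteEdges_adj] at h
      · apply h.2
        rw [Set.mem_singleton_iff]
        by_cases hp : h' = x
        · rw [hh'', if_pos hp, hp]
        · rw [hh'', if_neg hp]
          rcases hh with h3 | h3
          · exact absurd h3 hp
          · rw [h3]; exact Sym2.eq_swap
      · rcases hcvw with rfl | rfl
        · rcases hother with h3 | h3 <;> rw [S.hNv h'' h.1] at h3
          exacts [S.hxw h3.symm, S.hyw h3.symm]
        · rcases hother with h3 | h3 <;> rw [S.hNw h'' h.1] at h3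
          exacts [S.hxv h3.symm, S.hyv h3.symm]
    apply notWins2_of (s₁ := u) (t₁ := v) (t₂ := w) (Ne.symm hu) (Ne.symm huw) S.hvw.ne
    · intro d _ hdom
      exact S.no_singleton d (dominating_of_deleteEdges hdom)
    · intro d₁ d₂ h1 h2 hdom
      have hadjU : ∀ d, G.Adj d u → d = x ∨ d = y := by
        intro d hd
        have hdv : d ≠ v := fun h => huw (S.hNv u (h ▸ hd))
        have hdw : d ≠ w := fun h => hu (S.hNw u (h ▸ hd))
        rcases ((S.hU d u hdv hdw hu huw).mp hd).2 with h | h | h | h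
        exacts [Or.inl h, Or.inr h, absurd h.symm (Ne.symm hux), absurd h.symm (Ne.symm huy)]
      have hh : (d₁ = x ∨ d₁ = y) ∨ (d₂ = x ∨ d₂ = y) := by
        rcases dominating_pair_elim hdom (Ne.symm h1) (Ne.symm h2) with h | h <;>
          rw [hG', SimpleGraph.deleteEdges_adj] at h
        · exact Or.inl (hadjU d₁ h.1)
        · exact Or.inr (hadjU d₂ h.1)
      have hc : (d₁ = v ∨ d₁ = w) ∨ (d₂ = v ∨ d₂ = w) := by
        by_cases h1' : v = d₁
        · exact Or.inl (Or.inl h1'.symm)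
        by_cases h2' : v = d₂
        · exact Or.inr (Or.inl h2'.symm)
        rcases dominating_pair_elim hdom h1' h2' with h | h <;>
          rw [hG', SimpleGraph.deleteEdges_adj] at h
        · exact Or.inl (Or.inr (S.adj_to_v h.1))
        · exact Or.inr (Or.inr (S.adj_to_v h.1))
      rcases hh with hh | hh
      · rcases hc with hc | hc
        · rcases hh with rfl | rfl <;> rcases hc with h' | h'
          exacts [S.hxv h', S.hxw h', S.hyv h', S.hyw h']
        · exact main d₁ d₂ hh hc hdom
      · rcases hc with hc | hc
        · rw [Set.pair_comm] at hdom
          exact main d₂ d₁ hh hc hdom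
        · rcases hh with rfl | rfl <;> rcases hc with h' | h'
          exacts [S.hxv h', S.hxw h', S.hyv h', S.hyw h']
  · push_neg at hExtra
    apply notWins2_of (s₁ := v) (t₁ := x) (t₂ := y) S.hxv S.hyv S.hxy
    · intro d _ hdom
      exact S.no_singleton d (dominating_of_deleteEdges hdom)
    · intro d₁ d₂ h1 h2 hdom
      have hx : x = d₁ ∨ x = d₂ := by
        by_contra hcon
        push_neg at hcon
        rcases dominating_pair_elim hdom hcon.1 hcon.2 with h | h <;>
          rw [hG', SimpleGraph.deleteEdges_adj] at h
        · have hdw : d₁ ≠ w := fun hh => S.hxv (S.hNw x (hh ▸ h.1))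
          have := hExtra d₁ h1 hdw (fun hh => hcon.1 hh.symm)
          subst this
          exact h.2 (by rw [Set.mem_singleton_iff]; exact Sym2.eq_swap)
        · have hdw : d₂ ≠ w := fun hh => S.hxv (S.hNw x (hh ▸ h.1))
          have := hExtra d₂ h2 hdw (fun hh => hcon.2 hh.symm)
          subst this
          exact h.2 (by rw [Set.mem_singleton_iff]; exact Sym2.eq_swap)
      have hy : y = d₁ ∨ y = d₂ := by
        by_contra hcon
        push_neg at hcon
        rcases dominating_pair_elim hdom hcon.1 hcon.2 with h | h <;>
          rw [hG', SimpleGraph.deleteEdges_adj] at h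
        · have hdw : d₁ ≠ w := fun hh => S.hyv (S.hNw y (hh ▸ h.1))
          have hdx : d₁ = x := by
            by_contra hdx
            exact hcon.1 (hExtra d₁ h1 hdw hdx).symm
          subst hdx
          exact h.2 rfl
        · have hdw : d₂ ≠ w := fun hh => S.hyv (S.hNw y (hh ▸ h.1))
          have hdx : d₂ = x := by
            by_contra hdx
            exact hcon.2 (hExtra d₂ h2 hdw hdx).symm
          subst hdx
          exact h.2 rfl
      have hd₁ : d₁ = x ∨ d₁ = y := by
        rcases hx with h | h
        · exact Or.inl h.symm
        rcases hy with h' | h'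
        · exact Or.inr h'.symm
        · exact absurd (h.trans h'.symm) S.hxy
      have hd₂ : d₂ = x ∨ d₂ = y := by
        rcases hx with h | h
        · rcases hy with h' | h'
          · exact absurd (h.trans h'.symm) S.hxy
          · exact Or.inr h'.symm
        · exact Or.inl h.symm
      rcases dominating_pair_elim hdom (Ne.symm h1) (Ne.symm h2) with h | h <;>
        rw [hG', SimpleGraph.deleteEdges_adj] at h
      · rcases hd₁ with rfl | rfl
        exacts [S.hxw (S.adj_to_v h.1), S.hyw (S.adj_to_v h.1)]
      · rcases hd₂ with rfl | rfl
        exacts [S.hxw (S.adj_to_v h.1), S.hyw (S.adj_to_v h.1)]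

end NotWins

section Crit
variable {V : Type*} {G : SimpleGraph V} {v w x y : V}

lemma Struct.critical2 (S : Struct G v w x y) : Critical2 G := by
  refine ⟨⟨wins2_of_struct S, ?_⟩, ?_⟩
  · intro h1
    obtain ⟨d, _, hdom⟩ := h1 v
    exact S.no_singleton d hdom
  · intro a b hadj
    by_cases hav : a = v
    · have hb : b = w := S.hNv b (hav ▸ hadj)
      rw [hav, hb]
      exact S.notwins_vw
    by_cases haw : a = w
    · have hb : b = v := S.hNw b (haw ▸ hadj)
      rw [haw, hb, Sym2.eq_swap]
      exact S.notwins_vw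
    by_cases hbv : b = v
    · exact absurd (S.adj_to_v (hbv ▸ hadj)) haw
    by_cases hbw : b = w
    · exact absurd (S.adj_to_w (hbw ▸ hadj)) hav
    have hU := (S.hU a b hav haw hbv hbw).mp hadj
    have hab : a ≠ b := hU.1
    rcases hU.2 with hax | hay | hbx | hby
    · by_cases hby : b = y
      · rw [hax, hby]; exact S.notwins_xy
      · rw [hax]; exact S.notwins_xu hbv hbw (fun h => hab (hax.trans h.symm)) hby
    · by_cases hbx : b = x
      · rw [hay, hbx, Sym2.eq_swap]; exact S.notwins_xy
      · rw [hay]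
        exact S.swapXY.notwins_xu hbv hbw (fun h => hab (hay.trans h.symm)) hbx
    · rw [hbx, Sym2.eq_swap]
      by_cases hay : a = y
      · rw [hay, Sym2.eq_swap]; exact S.swapXY.notwins_xy
      · exact S.notwins_xu hav haw (fun h => hab (h.trans hbx.symm)) hay
    · rw [hby, Sym2.eq_swap]
      by_cases hax : a = x
      · rw [hax, Sym2.eq_swap]; exact S.notwins_xy
      · exact S.swapXY.notwins_xu hav haw (fun h => hab (h.trans hby.symm)) hax

end Crit

section IsoLemmas

lemma HGraph_adj {m : ℕ} {i j : Fin m} :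
    (HGraph m).Adj i j ↔ i ≠ j ∧ (i.val < 2 ∨ j.val < 2) := by
  simp [HGraph, SimpleGraph.fromRel_adj]

lemma DU_adj_inl_inl {α β : Type*} {G : SimpleGraph α} {H : SimpleGraph β} {a b : α} :
    (DisjUnion G H).Adj (inl a) (inl b) ↔ G.Adj a b := by
  rw [DisjUnion, SimpleGraph.fromRel_adj]
  constructor
  · rintro ⟨h1, h2 | h2⟩
    exacts [h2, h2.symm]
  · intro h
    exact ⟨by simp [h.ne], Or.inl h⟩

lemma DU_adj_inr_inr {α β : Type*} {G : SimpleGraph α} {H : SimpleGraph β} {a b : β} :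
    (DisjUnion G H).Adj (inr a) (inr b) ↔ H.Adj a b := by
  rw [DisjUnion, SimpleGraph.fromRel_adj]
  constructor
  · rintro ⟨h1, h2 | h2⟩
    exacts [h2, h2.symm]
  · intro h
    exact ⟨by simp [h.ne], Or.inl h⟩

lemma DU_adj_inl_inr {α β : Type*} {G : SimpleGraph α} {H : SimpleGraph β} {a : α} {b : β} :
    ¬ (DisjUnion G H).Adj (inl a) (inr b) := by
  rw [DisjUnion, SimpleGraph.fromRel_adj]
  rintro ⟨h1, h2 | h2⟩ <;> exact h2

variable {V : Type*} {G : SimpleGraph V}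

set_option maxHeartbeats 1000000 in
lemma struct_of_iso {m : ℕ} (hm : 2 ≤ m)
    (f : G ≃g DisjUnion (HGraph 2) (HGraph m)) (i0 i1 : Fin m)
    (h0 : i0.val = 0) (h1 : i1.val = 1) :
    Struct G (f.symm (inl 0)) (f.symm (inl 1))
      (f.symm (inr i0)) (f.symm (inr i1)) := by
  set v := f.symm (inl 0) with hv
  set w := f.symm (inl 1) with hw
  set x := f.symm (inr i0) with hx
  set y := f.symm (inr i1) with hy
  have hfv : f v = inl 0 := f.apply_symm_apply _
  have hfw : f w = inl 1 := f.apply_symm_apply _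
  have hfx : f x = inr i0 := f.apply_symm_apply _
  have hfy : f y = inr i1 := f.apply_symm_apply _
  have hinj : ∀ a b : V, f a = f b → a = b := fun a b h => f.toEquiv.injective h
  have hmap : ∀ a b : V, G.Adj a b ↔ (DisjUnion (HGraph 2) (HGraph m)).Adj (f a) (f b) :=
    fun a b => (f.map_adj_iff).symm
  have hfin2 : ∀ j : Fin 2, j = 0 ∨ j = 1 := by decide
  have h01m : i0 ≠ i1 := fun h => by have := congrArg Fin.val h; omega
  have hlt : ∀ k : Fin m, k.val < 2 ↔ (k = i0 ∨ k = i1) := by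
    intro k
    constructor
    · intro h
      by_cases hk0 : (k : ℕ) = 0
      · exact Or.inl (Fin.ext (by omega))
      · exact Or.inr (Fin.ext (by omega))
    · rintro (rfl | rfl) <;> omega
  refine ⟨?_, ?_, ?_, ?_, ?_, ?_, ?_, ?_, ?_⟩
  · rw [hmap, hfv, hfw, DU_adj_inl_inl, HGraph_adj]
    exact ⟨by decide, Or.inl (by decide)⟩
  · intro u hu
    rw [hmap, hfv] at hu
    rcases hc : f u with j | i
    · rw [hc, DU_adj_inl_inl, HGraph_adj] at hu
      rcases hfin2 j with rfl | rfl
      · exact absurd rfl hu.1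
      · exact hinj u w (hc.trans hfw.symm)
    · rw [hc] at hu
      exact absurd hu DU_adj_inl_inr
  · intro u hu
    rw [hmap, hfw] at hu
    rcases hc : f u with j | i
    · rw [hc, DU_adj_inl_inl, HGraph_adj] at hu
      rcases hfin2 j with rfl | rfl
      · exact hinj u v (hc.trans hfv.symm)
      · exact absurd rfl hu.1
    · rw [hc] at hu
      exact absurd hu DU_adj_inl_inr
  · intro h
    have := congrArg f h; rw [hfx, hfv] at this; exact Sum.inr_ne_inl this
  · intro h
    have := congrArg f h; rw [hfx, hfw] at this; exact Sum.inr_ne_inl this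
  · intro h
    have := congrArg f h; rw [hfy, hfv] at this; exact Sum.inr_ne_inl this
  · intro h
    have := congrArg f h; rw [hfy, hfw] at this; exact Sum.inr_ne_inl this
  · intro h
    have := congrArg f h; rw [hfx, hfy] at this
    exact h01m (Sum.inr_injective this)
  · intro a b hav haw hbv hbw
    have hga : ∃ i : Fin m, f a = inr i := by
      rcases hc : f a with j | i
      · rcases hfin2 j with rfl | rfl
        · exact absurd (hinj a v (hc.trans hfv.symm)) hav
        · exact absurd (hinj a w (hc.trans hfw.symm)) haw
      · exact ⟨i, rfl⟩
    have hgb : ∃ i : Fin m, f b = inr i := by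
      rcases hc : f b with j | i
      · rcases hfin2 j with rfl | rfl
        · exact absurd (hinj b v (hc.trans hfv.symm)) hbv
        · exact absurd (hinj b w (hc.trans hfw.symm)) hbw
      · exact ⟨i, rfl⟩
    obtain ⟨i, hi⟩ := hga
    obtain ⟨j, hj⟩ := hgb
    have hax : a = x ↔ i = i0 := by
      constructor
      · intro h; rw [h, hfx] at hi; exact (Sum.inr_injective hi).symm
      · intro h; exact hinj a x (by rw [hi, hfx, h])
    have hay : a = y ↔ i = i1 := by
      constructor
      · intro h; rw [h, hfy] at hi; exact (Sum.inr_injective hi).symm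
      · intro h; exact hinj a y (by rw [hi, hfy, h])
    have hbx : b = x ↔ j = i0 := by
      constructor
      · intro h; rw [h, hfx] at hj; exact (Sum.inr_injective hj).symm
      · intro h; exact hinj b x (by rw [hj, hfx, h])
    have hby : b = y ↔ j = i1 := by
      constructor
      · intro h; rw [h, hfy] at hj; exact (Sum.inr_injective hj).symm
      · intro h; exact hinj b y (by rw [hj, hfy, h])
    have hab : a ≠ b ↔ i ≠ j := by
      constructor
      · intro h hc
        exact h (hinj a b (by rw [hi, hj, hc]))
      · intro h hc'
        apply h
        apply Sum.inr_injective (α := Fin 2)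
        rw [← hi, ← hj, hc']
    have hADJ : G.Adj a b ↔ (i ≠ j ∧ (i.val < 2 ∨ j.val < 2)) := by
      rw [hmap, hi, hj, DU_adj_inr_inr, HGraph_adj]
    rw [hADJ, hab, hax, hay, hbx, hby, hlt i, hlt j]
    constructor
    · rintro ⟨hh, h2 | h2⟩
      · exact ⟨hh, h2.elim (fun h => Or.inl h) (fun h => Or.inr (Or.inl h))⟩
      · exact ⟨hh, h2.elim (fun h => Or.inr (Or.inr (Or.inl h))) (fun h => Or.inr (Or.inr (Or.inr h)))⟩
    · rintro ⟨hh, h2 | h2 | h2 | h2⟩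
      exacts [⟨hh, Or.inl (Or.inl h2)⟩, ⟨hh, Or.inl (Or.inr h2)⟩,
        ⟨hh, Or.inr (Or.inl h2)⟩, ⟨hh, Or.inr (Or.inr h2)⟩]

end IsoLemmas

section ToIso
variable {V : Type*} {G : SimpleGraph V}

lemma DU_adj_inr_inl {α β : Type*} {G : SimpleGraph α} {H : SimpleGraph β} {a : β} {b : α} :
    ¬ (DisjUnion G H).Adj (inr a) (inl b) := by
  rw [DisjUnion, SimpleGraph.fromRel_adj]
  rintro ⟨h1, h2 | h2⟩ <;> exact h2

lemma Struct.toIso [Fintype V] {v w x y : V} (S : Struct G v w x y) :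
    ∃ m : ℕ, 2 ≤ m ∧ Nonempty (G ≃g DisjUnion (HGraph 2) (HGraph m)) := by
  classical
  have hvwne : v ≠ w := S.hvw.ne
  have hpv : v = v ∨ v = w := Or.inl rfl
  have hpw : w = v ∨ w = w := Or.inr rfl
  have hx' : ¬ (x = v ∨ x = w) := fun h => h.elim S.hxv S.hxw
  have hy' : ¬ (y = v ∨ y = w) := fun h => h.elim S.hyv S.hyw
  obtain ⟨e₁, h1v, h1w⟩ :
      ∃ e : {a : V // a = v ∨ a = w} ≃ Fin 2, e ⟨v, hpv⟩ = 0 ∧ e ⟨w, hpw⟩ = 1 := by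
    refine ⟨{ toFun := fun a => if a.1 = v then 0 else 1
              invFun := fun i => if i = 0 then ⟨v, hpv⟩ else ⟨w, hpw⟩
              left_inv := ?_
              right_inv := ?_ }, ?_, ?_⟩
    · rintro ⟨a, rfl | rfl⟩
      · simp
      · simp [Ne.symm hvwne]
    · intro i
      fin_cases i
      · simp
      · simp [Ne.symm hvwne]
    · simp
    · simp [Ne.symm hvwne]
  obtain ⟨m, hm, hg⟩ : ∃ m, 2 ≤ m ∧ Nonempty ({a : V // ¬(a = v ∨ a = w)} ≃ Fin m) :=
    ⟨_, Fintype.one_lt_card_iff.mpr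
        ⟨⟨x, hx'⟩, ⟨y, hy'⟩, fun h => S.hxy (congrArg Subtype.val h)⟩,
      ⟨Fintype.equivFin _⟩⟩
  obtain ⟨g⟩ := hg
  refine ⟨m, hm, ?_⟩
  set i0 : Fin m := ⟨0, by omega⟩ with hi0def
  set i1 : Fin m := ⟨1, by omega⟩ with hi1def
  have hi0 : (i0 : ℕ) = 0 := rfl
  have hi1 : (i1 : ℕ) = 1 := rfl
  have h01 : i0 ≠ i1 := fun h => by have := congrArg Fin.val h; omega
  obtain ⟨e₂, h2x, h2y⟩ :
      ∃ e : {a : V // ¬(a = v ∨ a = w)} ≃ Fin m, e ⟨x, hx'⟩ = i0 ∧ e ⟨y, hy'⟩ = i1 := by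
    set gx := g ⟨x, hx'⟩ with hgx
    set gy := g ⟨y, hy'⟩ with hgy
    have hgxy : gx ≠ gy := fun h => S.hxy (congrArg Subtype.val (g.injective h))
    set c := (Equiv.swap gx i0) gy with hc
    have hci0 : c ≠ i0 := by
      by_cases hgyi : gy = i0
      · rw [hc, hgyi, Equiv.swap_apply_right]
        intro h
        exact hgxy (h.trans hgyi.symm)
      · rw [hc, Equiv.swap_apply_of_ne_of_ne (Ne.symm hgxy) hgyi]
        exact hgyi
    refine ⟨g.trans ((Equiv.swap gx i0).trans (Equiv.swap c i1)), ?_, ?_⟩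
    · show Equiv.swap c i1 ((Equiv.swap gx i0) gx) = i0
      rw [Equiv.swap_apply_left]
      exact Equiv.swap_apply_of_ne_of_ne (Ne.symm hci0) h01
    · show Equiv.swap c i1 ((Equiv.swap gx i0) gy) = i1
      rw [← hc, Equiv.swap_apply_left]
  set E : V ≃ (Fin 2 ⊕ Fin m) :=
    (Equiv.sumCompl (fun a => a = v ∨ a = w)).symm.trans (Equiv.sumCongr e₁ e₂) with hE
  have hEp : ∀ (a : V) (h : a = v ∨ a = w), E a = inl (e₁ ⟨a, h⟩) := by
    intro a h
    show (Equiv.sumCongr e₁ e₂) ((Equiv.sumCompl _).symm a) = _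
    rw [Equiv.sumCompl_symm_apply_of_pos (p := fun a => a = v ∨ a = w) h]
    rfl
  have hEn : ∀ (a : V) (h : ¬(a = v ∨ a = w)), E a = inr (e₂ ⟨a, h⟩) := by
    intro a h
    show (Equiv.sumCongr e₁ e₂) ((Equiv.sumCompl _).symm a) = _
    rw [Equiv.sumCompl_symm_apply_of_neg (p := fun a => a = v ∨ a = w) h]
    rfl
  have hEv : E v = inl 0 := by rw [hEp v hpv, h1v]
  have hEw : E w = inl 1 := by rw [hEp w hpw, h1w]
  have hlt : ∀ k : Fin m, (k : ℕ) < 2 ↔ (k = i0 ∨ k = i1) := by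
    intro k
    constructor
    · intro h
      by_cases hk0 : (k : ℕ) = 0
      · exact Or.inl (Fin.ext (by omega))
      · exact Or.inr (Fin.ext (by omega))
    · rintro (rfl | rfl) <;> omega
  have hinj2 : ∀ (aa bb : V) (haa : ¬(aa = v ∨ aa = w)) (hbb : ¬(bb = v ∨ bb = w)),
      e₂ ⟨aa, haa⟩ = e₂ ⟨bb, hbb⟩ ↔ aa = bb := by
    intro aa bb haa hbb
    constructor
    · intro h
      exact congrArg Subtype.val (e₂.injective h)
    · intro h
      subst h
      rfl
  refine ⟨⟨E, @fun a b => ?_⟩⟩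
  by_cases hpa : a = v ∨ a = w
  · by_cases hpb : b = v ∨ b = w
    · rcases hpa with ha | ha <;> rcases hpb with hb | hb <;> subst ha <;> subst hb
      · rw [hEv]
        exact iff_of_false (by rw [DU_adj_inl_inl, HGraph_adj]; simp) G.irrefl
      · rw [hEv, hEw]
        exact iff_of_true
          (by rw [DU_adj_inl_inl, HGraph_adj]; exact ⟨by decide, Or.inl (by decide)⟩) S.hvw
      · rw [hEv, hEw]
        exact iff_of_true
          (by rw [DU_adj_inl_inl, HGraph_adj]; exact ⟨by decide, Or.inl (by decide)⟩) S.hvw.symm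
      · rw [hEw]
        exact iff_of_false (by rw [DU_adj_inl_inl, HGraph_adj]; simp) G.irrefl
    · rw [hEp a hpa, hEn b hpb]
      refine iff_of_false DU_adj_inl_inr ?_
      intro hadj
      rcases hpa with ha | ha
      · exact hpb (Or.inr (S.hNv b (ha ▸ hadj)))
      · exact hpb (Or.inl (S.hNw b (ha ▸ hadj)))
  · by_cases hpb : b = v ∨ b = w
    · rw [hEn a hpa, hEp b hpb]
      refine iff_of_false DU_adj_inr_inl ?_
      intro hadj
      rcases hpb with hb | hb
      · exact hpa (Or.inr (S.hNv a (hb ▸ hadj.symm)))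
      · exact hpa (Or.inl (S.hNw a (hb ▸ hadj.symm)))
    · rw [hEn a hpa, hEn b hpb, DU_adj_inr_inr, HGraph_adj]
      have hav : a ≠ v := fun h => hpa (Or.inl h)
      have haw : a ≠ w := fun h => hpa (Or.inr h)
      have hbv : b ≠ v := fun h => hpb (Or.inl h)
      have hbw : b ≠ w := fun h => hpb (Or.inr h)
      rw [S.hU a b hav haw hbv hbw]
      have hax : e₂ ⟨a, hpa⟩ = i0 ↔ a = x := by rw [← h2x]; exact hinj2 a x hpa hx'
      have hay : e₂ ⟨a, hpa⟩ = i1 ↔ a = y := by rw [← h2y]; exact hinj2 a y hpa hy'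
      have hbx : e₂ ⟨b, hpb⟩ = i0 ↔ b = x := by rw [← h2x]; exact hinj2 b x hpb hx'
      have hby : e₂ ⟨b, hpb⟩ = i1 ↔ b = y := by rw [← h2y]; exact hinj2 b y hpb hy'
      have hne : e₂ ⟨a, hpa⟩ ≠ e₂ ⟨b, hpb⟩ ↔ a ≠ b := not_congr (hinj2 a b hpa hpb)
      rw [hne, hlt (e₂ ⟨a, hpa⟩), hlt (e₂ ⟨b, hpb⟩), hax, hay, hbx, hby]
      constructor
      · rintro ⟨hh, h2 | h2⟩
        · exact ⟨hh, h2.elim (fun h => Or.inl h) (fun h => Or.inr (Or.inl h))⟩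
        · exact ⟨hh, h2.elim (fun h => Or.inr (Or.inr (Or.inl h)))
            (fun h => Or.inr (Or.inr (Or.inr h)))⟩
      · rintro ⟨hh, h2 | h2 | h2 | h2⟩
        exacts [⟨hh, Or.inl (Or.inl h2)⟩, ⟨hh, Or.inl (Or.inr h2)⟩,
          ⟨hh, Or.inr (Or.inl h2)⟩, ⟨hh, Or.inr (Or.inr h2)⟩]

end ToIso

section Forward
variable {V : Type*} {G : SimpleGraph V}

lemma struct_of_critical (hC : Critical2 G) (v w : V)
    (hNset : G.neighborSet v = {w}) : ∃ x y, Struct G v w x y := by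
  have hNv : ∀ u, G.Adj v u → u = w := fun u hu => by
    have h : u ∈ G.neighborSet v := hu
    rw [hNset] at h
    exact h
  have hvw : G.Adj v w := by
    have h : w ∈ G.neighborSet v := by rw [hNset]; rfl
    exact h
  have hvwne : v ≠ w := hvw.ne
  have hnW1 := hC.1.2
  have hcrit := hC.2
  have hsmall : (∀ u : V, u = v ∨ u = w) → False := by
    intro hall
    apply hnW1
    intro s₁
    by_cases h : s₁ = v
    · refine ⟨w, by rw [h]; exact hvwne.symm, ?_⟩
      intro u hu
      have hu' : u = v := (hall u).resolve_right (by simpa using hu)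
      exact ⟨w, rfl, by rw [hu']; exact hvw.symm⟩
    · refine ⟨v, fun hh => h hh.symm, ?_⟩
      intro u hu
      have hu' : u = w := (hall u).resolve_left (by simpa using hu)
      exact ⟨v, rfl, by rw [hu']; exact hvw⟩
  obtain ⟨d₁, hd₁, hcase⟩ := hC.1.1 w
  have hd₁v : d₁ = v := by
    by_contra hne
    rcases hcase with hdom | h2
    · have h := dominating_single_elim hdom (fun h => hne h.symm)
      exact hd₁ (hNv d₁ h.symm)
    · obtain ⟨d₂, hd₂, hdom⟩ := h2 v (by
        simp only [Set.mem_insert_iff, Set.mem_singleton_iff, not_or]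
        exact ⟨hvwne, fun h => hne h.symm⟩)
      simp only [Set.mem_insert_iff, Set.mem_singleton_iff, not_or] at hd₂
      rcases dominating_pair_elim hdom (fun h => hne h.symm) (Ne.symm hd₂.2.2) with h | h
      · exact hd₁ (hNv d₁ h.symm)
      · exact hd₂.1 (hNv d₂ h.symm)
  rw [hd₁v] at hcase
  rcases hcase with hdom | h2
  · exact absurd (fun u => by
      by_cases h : u = v
      · exact Or.inl h
      · exact Or.inr (hNv u (dominating_single_elim hdom h))) hsmall
  have K : ∀ s₂, s₂ ≠ v → s₂ ≠ w → ∃ d₂, (d₂ ≠ v ∧ d₂ ≠ w ∧ d₂ ≠ s₂) ∧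
      (∀ u, u ≠ v → u ≠ w → u ≠ d₂ → G.Adj d₂ u) := by
    intro s₂ h1 h2'
    obtain ⟨d₂, hd₂, hdom⟩ := h2 s₂ (by
      simp only [Set.mem_insert_iff, Set.mem_singleton_iff, not_or]
      exact ⟨h2', h1⟩)
    simp only [Set.mem_insert_iff, Set.mem_singleton_iff, not_or] at hd₂
    refine ⟨d₂, ⟨hd₂.2.1, hd₂.1, hd₂.2.2⟩, ?_⟩
    intro u hu1 hu2 hu3
    rcases dominating_pair_elim hdom hu1 hu3 with h | h
    · exact absurd (hNv u h) hu2
    · exact h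
  have hUex : ∃ z, z ≠ v ∧ z ≠ w := by
    by_contra hno
    push_neg at hno
    exact hsmall (fun u => by
      by_cases h : u = v
      · exact Or.inl h
      · exact Or.inr (hno u h))
  obtain ⟨z, hz1, hz2⟩ := hUex
  obtain ⟨x, ⟨hx1, hx2, _⟩, hxhub⟩ := K z hz1 hz2
  obtain ⟨y, ⟨hy1, hy2, hyx⟩, hyhub⟩ := K x hx1 hx2
  have hxy : x ≠ y := Ne.symm hyx
  have hNw : ∀ u, G.Adj w u → u = v := by
    intro z' hadj
    by_contra hne
    apply hcrit w z' hadj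
    apply wins2_of_hubs (v := v) (w := w) (x := x) (y := y) _
      hx1 hx2 hy1 hy2 hxy
    · intro u h1 h2 h3
      rw [SimpleGraph.deleteEdges_adj]
      refine ⟨hxhub u h1 h2 h3, ?_⟩
      rw [Set.mem_singleton_iff, Sym2.eq_iff]
      rintro (⟨ha, hb⟩ | ⟨ha, hb⟩)
      · exact hx2 ha
      · exact h2 hb
    · intro u h1 h2 h3
      rw [SimpleGraph.deleteEdges_adj]
      refine ⟨hyhub u h1 h2 h3, ?_⟩
      rw [Set.mem_singleton_iff, Sym2.eq_iff]
      rintro (⟨ha, hb⟩ | ⟨ha, hb⟩)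
      · exact hy2 ha
      · exact h2 hb
    · rw [SimpleGraph.deleteEdges_adj]
      refine ⟨hvw, ?_⟩
      rw [Set.mem_singleton_iff, Sym2.eq_iff]
      rintro (⟨h1, h2⟩ | ⟨h1, h2⟩)
      · exact hvwne h1
      · exact hne h1.symm
  have hIndep : ∀ a b, a ≠ v → a ≠ w → a ≠ x → a ≠ y → b ≠ v → b ≠ w → b ≠ x → b ≠ y →
      ¬ G.Adj a b := by
    intro a b ha1 ha2 ha3 ha4 hb1 hb2 hb3 hb4 hadj
    apply hcrit a b hadj
    apply wins2_of_hubs (v := v) (w := w) (x := x) (y := y) _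
      hx1 hx2 hy1 hy2 hxy
    · intro u h1 h2 h3
      rw [SimpleGraph.deleteEdges_adj]
      refine ⟨hxhub u h1 h2 h3, ?_⟩
      rw [Set.mem_singleton_iff, Sym2.eq_iff]
      rintro (⟨ha, hb⟩ | ⟨ha, hb⟩)
      · exact ha3 ha.symm
      · exact hb3 ha.symm
    · intro u h1 h2 h3
      rw [SimpleGraph.deleteEdges_adj]
      refine ⟨hyhub u h1 h2 h3, ?_⟩
      rw [Set.mem_singleton_iff, Sym2.eq_iff]
      rintro (⟨ha, hb⟩ | ⟨ha, hb⟩)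
      · exact ha4 ha.symm
      · exact hb4 ha.symm
    · rw [SimpleGraph.deleteEdges_adj]
      refine ⟨hvw, ?_⟩
      rw [Set.mem_singleton_iff, Sym2.eq_iff]
      rintro (⟨h1', h2'⟩ | ⟨h1', h2'⟩)
      · exact ha1 h1'.symm
      · exact hb1 h1'.symm
  refine ⟨x, y, ⟨hvw, hNv, hNw, hx1, hx2, hy1, hy2, hxy, ?_⟩⟩
  intro a b ha1 ha2 hb1 hb2
  constructor
  · intro hadj
    refine ⟨hadj.ne, ?_⟩
    by_contra hcon
    push_neg at hcon
    exact hIndep a b ha1 ha2 hcon.1 hcon.2.1 hb1 hb2 hcon.2.2.1 hcon.2.2.2 hadj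
  · rintro ⟨hab, h | h | h | h⟩
    · rw [h]
      exact hxhub b hb1 hb2 (fun hh => hab (h.trans hh.symm))
    · rw [h]
      exact hyhub b hb1 hb2 (fun hh => hab (h.trans hh.symm))
    · rw [h]
      exact (hxhub a ha1 ha2 (fun hh => hab (hh.trans h.symm))).symm
    · rw [h]
      exact (hyhub a ha1 ha2 (fun hh => hab (hh.trans h.symm))).symm

end Forward

theorem stmt2 {V : Type*} [Fintype V] (G : SimpleGraph V)
    (hδ₁ : ∃ v : V, (G.neighborSet v).ncard = 1)
    (hδ₂ : ∀ v : V, 1 ≤ (G.neighborSet v).ncard) :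
    Critical2 G ↔ ∃ m : ℕ, 2 ≤ m ∧ Nonempty (G ≃g DisjUnion (HGraph 2) (HGraph m)) := by
  constructor
  · intro hC
    obtain ⟨v, hv⟩ := hδ₁
    obtain ⟨w, hw⟩ := Set.ncard_eq_one.mp hv
    obtain ⟨x, y, S⟩ := struct_of_critical hC v w hw
    exact S.toIso
  · rintro ⟨m, hm, ⟨f⟩⟩
    exact (struct_of_iso hm f ⟨0, by omega⟩ ⟨1, by omega⟩ rfl rfl).critical2
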